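/- Let F : ℝ^d → ℝ be M-smooth and let ĝ be any vector with ‖∇F(x) − ĝ‖ ≤ χ. If step size η ≤ 1/M, ‖∇F(x)‖ ≥ 4χ, and x⁺ = x − η·ĝ, then F(x⁺) − F(x) ≤ −(η/6)‖ĝ‖². -/

import Mathlib

open InnerProductSpace

private lemma fderiv_apply_eq_inner_gradient {d : ℕ} (F : EuclideanSpace ℝ (Fin d) → ℝ)
    (p v : EuclideanSpace ℝ (Fin d)) :
    fderiv ℝ F p v = @inner ℝ _ _ (gradient F p) v := by
  have : toDual ℝ (EuclideanSpace ℝ (Fin d)) (gradient F p) = fderiv ℝ F p := by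
    rw [gradient]; exact (toDual ℝ _).apply_symm_apply _
  rw [← this]; rfl

private lemma descent_lemma {d : ℕ} (F : EuclideanSpace ℝ (Fin d) → ℝ) (M : ℝ)
    (hdiff : Differentiable ℝ F)
    (hsmooth : ∀ x y, ‖gradient F x - gradient F y‖ ≤ M * ‖x - y‖)
    (x v : EuclideanSpace ℝ (Fin d)) :
    F (x + v) ≤ F x + @inner ℝ _ _ (gradient F x) v + M / 2 * ‖v‖ ^ 2 := by
  set G := gradient F x with hG
  set c : ℝ → EuclideanSpace ℝ (Fin d) := fun t => x + t • v with hc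
  set h : ℝ → ℝ := fun t => F (c t) - (@inner ℝ _ _ G v) * t - (M / 2 * ‖v‖ ^ 2) * t ^ 2 with hh
  have hcd : ∀ t : ℝ, HasDerivAt c v t := fun t => by
    simpa [hc] using ((hasDerivAt_id t).smul_const v).const_add x
  have hhd : ∀ t : ℝ, HasDerivAt h
      (@inner ℝ _ _ (gradient F (c t)) v - @inner ℝ _ _ G v
        - (M / 2 * ‖v‖ ^ 2) * (2 * t)) t := by
    intro t
    have h1 : HasDerivAt (fun t => F (c t)) (fderiv ℝ F (c t) v) t :=
      (hdiff (c t)).hasFDerivAt.comp_hasDerivAt t (hcd t)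
    rw [fderiv_apply_eq_inner_gradient] at h1
    have h2 : HasDerivAt (fun t : ℝ => (@inner ℝ _ _ G v) * t) (@inner ℝ _ _ G v) t := by
      simpa using (hasDerivAt_id t).const_mul (@inner ℝ _ _ G v)
    have h3 : HasDerivAt (fun t : ℝ => (M / 2 * ‖v‖ ^ 2) * t ^ 2)
        ((M / 2 * ‖v‖ ^ 2) * (2 * t)) t := by
      simpa [mul_comm] using ((hasDerivAt_pow 2 t).const_mul (M / 2 * ‖v‖ ^ 2))
    exact (h1.sub h2).sub h3
  have key : h 1 ≤ h 0 := by
    have hanti : AntitoneOn h (Set.Icc (0 : ℝ) 1) := by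
      apply antitoneOn_of_deriv_nonpos (convex_Icc 0 1)
      · exact fun t _ => ((hhd t).continuousAt).continuousWithinAt
      · exact fun t _ => ((hhd t).differentiableAt).differentiableWithinAt
      · intro t ht
        rw [interior_Icc] at ht
        rw [(hhd t).deriv]
        have hb : @inner ℝ _ _ (gradient F (c t)) v - @inner ℝ _ _ G v
            = @inner ℝ _ _ (gradient F (c t) - G) v := by
          rw [inner_sub_left]
        rw [hb]
        have h4 : @inner ℝ _ _ (gradient F (c t) - G) v ≤ ‖gradient F (c t) - G‖ * ‖v‖ :=
          real_inner_le_norm _ _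
        have h5 : ‖gradient F (c t) - G‖ ≤ M * (t * ‖v‖) := by
          have := hsmooth (c t) x
          simpa [hc, norm_smul, abs_of_pos ht.1] using this
        have hv : (0 : ℝ) ≤ ‖v‖ := norm_nonneg v
        nlinarith [mul_le_mul_of_nonneg_right h5 hv]
    exact hanti (by norm_num) (by norm_num) (by norm_num)
  simp only [hh, hc] at key
  simp only [one_smul, zero_smul, add_zero] at key
  nlinarith [key]

/-- If `‖∇F(x) - ĝ‖ ≤ χ`, `‖∇F(x)‖ ≥ 4χ`, `η ≤ 1/M`, and `x⁺ = x - η ĝ`, then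
`F(x⁺) - F(x) ≤ -(η/6)‖ĝ‖²`. -/
theorem stmt_4 {d : ℕ} (F : EuclideanSpace ℝ (Fin d) → ℝ) (M η χ : ℝ)
    (hdiff : Differentiable ℝ F)
    (hsmooth : ∀ x y, ‖gradient F x - gradient F y‖ ≤ M * ‖x - y‖)
    (hη : 0 < η) (hηM : η ≤ 1 / M) (hM : 0 < M)
    (x g : EuclideanSpace ℝ (Fin d))
    (hest : ‖gradient F x - g‖ ≤ χ) (hgrad : 4 * χ ≤ ‖gradient F x‖) :
    F (x - η • g) - F x ≤ -(η / 6) * ‖g‖ ^ 2 := by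
  set G := gradient F x with hG
  have hMη : M * η ≤ 1 := by
    rw [mul_comm]; exact (le_div_iff₀ hM).mp hηM
  have hχ : 0 ≤ χ := le_trans (norm_nonneg _) hest
  have hgl : 3 * χ ≤ ‖g‖ := by
    have := norm_sub_norm_le G g
    linarith [le_trans this hest]
  have hdesc := descent_lemma F M hdiff hsmooth x (-(η • g))
  have hx : x + -(η • g) = x - η • g := by rw [← sub_eq_add_neg]
  rw [hx] at hdesc
  have hin : @inner ℝ _ _ G (-(η • g)) = -(η * @inner ℝ _ _ G g) := by
    rw [inner_neg_right, inner_smul_right]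
  have hnv : ‖-(η • g)‖ ^ 2 = η ^ 2 * ‖g‖ ^ 2 := by
    rw [norm_neg, norm_smul, mul_pow, Real.norm_eq_abs, sq_abs]
  rw [hin, hnv] at hdesc
  -- ⟪G, g⟫ = ‖g‖² + ⟪G - g, g⟫ ≥ ‖g‖² - χ‖g‖
  have hGg : ‖g‖ ^ 2 - χ * ‖g‖ ≤ @inner ℝ _ _ G g := by
    have h1 : @inner ℝ _ _ G g = @inner ℝ _ _ g g + @inner ℝ _ _ (G - g) g := by
      rw [inner_sub_left]; ring
    have h2 : @inner ℝ _ _ (G - g) g ≥ -(‖G - g‖ * ‖g‖) := by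
      have := abs_real_inner_le_norm (G - g) g
      have := abs_le.mp this
      linarith [this.1]
    have h3 : ‖G - g‖ * ‖g‖ ≤ χ * ‖g‖ :=
      mul_le_mul_of_nonneg_right hest (norm_nonneg g)
    rw [h1, real_inner_self_eq_norm_sq]
    linarith
  have hχg : χ * ‖g‖ ≤ ‖g‖ ^ 2 / 3 := by nlinarith [norm_nonneg g]
  have hMη2 : M / 2 * (η ^ 2 * ‖g‖ ^ 2) ≤ η / 2 * ‖g‖ ^ 2 := by
    nlinarith [sq_nonneg ‖g‖, hη.le]
  nlinarith [hdesc, mul_le_mul_of_nonneg_left hGg hη.le]
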